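/- Let f : 2^V → ℝ≥0 be a monotone submodular function with f(∅) = 0, let OPT be any set of at most k_opt elements, and let X₀ = ∅, X₁, …, X_k be the sets produced by greedily adding in each step an element maximizing the marginal gain over all of V. Then f(X_k) ≥ (1 − (1 − 1/k_opt)^k) · f(OPT). -/
import Mathlib

lemma greedy_aux_sum {ι : Type*} [DecidableEq ι] (f : Finset ι → ℝ)
    (hmono : ∀ S T : Finset ι, S ⊆ T → f S ≤ f T)
    (hsub : ∀ S T : Finset ι, S ⊆ T → ∀ x ∉ T,
      f (insert x T) - f T ≤ f (insert x S) - f S)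
    (S T : Finset ι) :
    f (S ∪ T) ≤ f S + ∑ v ∈ T, (f (insert v S) - f S) := by
  induction T using Finset.induction_on with
  | empty => simp
  | @insert a T ha IH =>
    rw [Finset.sum_insert ha]
    have hins : S ∪ insert a T = insert a (S ∪ T) := by
      ext y; simp [or_comm, or_assoc, or_left_comm]
    rw [hins]
    by_cases h : a ∈ S ∪ T
    · rw [Finset.insert_eq_self.mpr h]
      have hterm : 0 ≤ f (insert a S) - f S :=
        sub_nonneg.mpr (hmono S (insert a S) (Finset.subset_insert _ _))
      linarith
    · have := hsub S (S ∪ T) Finset.subset_union_left a h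
      linarith

/-- Classical greedy guarantee of Nemhauser–Wolsey–Fisher: if `f` is a nonnegative
monotone submodular set function with `f ∅ = 0`, `OPT` has at most `k_opt` elements,
and `X₀ = ∅, X₁, …` is built by greedily adding an element of `V` with maximal
marginal gain, then `f(X_k) ≥ (1 − (1 − 1/k_opt)^k) · f(OPT)`. -/
theorem greedy_submodular_guarantee {ι : Type*} [DecidableEq ι]
    (V : Finset ι) (f : Finset ι → ℝ)
    (hnonneg : ∀ S, 0 ≤ f S)
    (hmono : ∀ S T : Finset ι, S ⊆ T → f S ≤ f T)
    (hsub : ∀ S T : Finset ι, S ⊆ T → ∀ x ∉ T,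
      f (insert x T) - f T ≤ f (insert x S) - f S)
    (hempty : f ∅ = 0)
    (kopt : ℕ) (hkopt : 0 < kopt)
    (OPT : Finset ι) (hOPTV : OPT ⊆ V) (hOPTcard : OPT.card ≤ kopt)
    (X : ℕ → Finset ι) (x : ℕ → ι)
    (hX0 : X 0 = ∅)
    (hstep : ∀ i, X (i + 1) = insert (x i) (X i))
    (hxV : ∀ i, x i ∈ V)
    (hgreedy : ∀ i, ∀ v ∈ V,
      f (insert v (X i)) - f (X i) ≤ f (insert (x i) (X i)) - f (X i))
    (k : ℕ) :
    (1 - (1 - 1 / (kopt : ℝ)) ^ k) * f OPT ≤ f (X k) := by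
  have hk1 : (1 : ℝ) ≤ (kopt : ℝ) := by exact_mod_cast hkopt
  have hkpos : (0 : ℝ) < (kopt : ℝ) := by linarith
  have hq0 : (0 : ℝ) ≤ 1 - 1 / (kopt : ℝ) := by
    have : 1 / (kopt : ℝ) ≤ 1 := by
      rw [div_le_one hkpos]; exact hk1
    linarith
  -- key per-step inequality
  have hkey : ∀ i, f OPT - f (X i) ≤ (kopt : ℝ) * (f (X (i + 1)) - f (X i)) := by
    intro i
    have hδ : ∀ v ∈ OPT, f (insert v (X i)) - f (X i) ≤ f (X (i + 1)) - f (X i) := by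
      intro v hv
      rw [hstep i]
      exact hgreedy i v (hOPTV hv)
    have hδnn : 0 ≤ f (X (i + 1)) - f (X i) := by
      rw [hstep i]
      exact sub_nonneg.mpr (hmono _ _ (Finset.subset_insert _ _))
    have h1 : f OPT ≤ f (X i ∪ OPT) := hmono _ _ Finset.subset_union_right
    have h2 := greedy_aux_sum f hmono hsub (X i) OPT
    have h3 : ∑ v ∈ OPT, (f (insert v (X i)) - f (X i))
        ≤ ∑ _v ∈ OPT, (f (X (i + 1)) - f (X i)) :=
      Finset.sum_le_sum hδ
    rw [Finset.sum_const, nsmul_eq_mul] at h3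
    have h4 : (OPT.card : ℝ) * (f (X (i + 1)) - f (X i))
        ≤ (kopt : ℝ) * (f (X (i + 1)) - f (X i)) := by
      apply mul_le_mul_of_nonneg_right _ hδnn
      exact_mod_cast hOPTcard
    linarith
  -- main induction
  have main : ∀ k, f OPT - f (X k) ≤ (1 - 1 / (kopt : ℝ)) ^ k * f OPT := by
    intro k
    induction k with
    | zero => simp [hX0, hempty]
    | succ k IH =>
      have hkey' := hkey k
      have step : f OPT - f (X (k + 1)) ≤ (1 - 1 / (kopt : ℝ)) * (f OPT - f (X k)) := by
        have : (1 / (kopt : ℝ)) * (f OPT - f (X k)) ≤ f (X (k + 1)) - f (X k) := by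
          rw [div_mul_eq_mul_div, div_le_iff₀ hkpos, one_mul]
          linarith [hkey k]
        nlinarith
      calc f OPT - f (X (k + 1)) ≤ (1 - 1 / (kopt : ℝ)) * (f OPT - f (X k)) := step
        _ ≤ (1 - 1 / (kopt : ℝ)) * ((1 - 1 / (kopt : ℝ)) ^ k * f OPT) :=
            mul_le_mul_of_nonneg_left IH hq0
        _ = (1 - 1 / (kopt : ℝ)) ^ (k + 1) * f OPT := by ring
  have := main k
  linarith
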